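/- If H acts on an algebra A as a left module algebra and F ∈ H⊗H is a twist, then the star product a *_F b := μ((F^{-1(1)} ▷ a) ⊗ (F^{-1(2)} ▷ b)) is associative on A. -/

import Mathlib

open TensorProduct

noncomputable def mulAct {K H A : Type*} [CommRing K] [AddCommGroup H] [Module K H]
    [Ring A] [Algebra K A] (act : H →ₗ[K] A →ₗ[K] A) :
    H ⊗[K] H →ₗ[K] A ⊗[K] A →ₗ[K] A :=
  TensorProduct.lift
    { toFun := fun h₁ =>
        { toFun := fun h₂ => LinearMap.mul' K A ∘ₗ TensorProduct.map (act h₁) (act h₂)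
          map_add' := by
            intro h₂ h₂'
            simp [map_add, TensorProduct.map_add_right, LinearMap.comp_add]
          map_smul' := by
            intro c h₂
            simp [map_smul, TensorProduct.map_smul_right, LinearMap.comp_smul] }
      map_add' := by
        intro h₁ h₁'
        ext h₂
        simp [map_add, TensorProduct.map_add_left, LinearMap.comp_add]
      map_smul' := by
        intro c h₁
        ext h₂
        simp [map_smul, TensorProduct.map_smul_left, LinearMap.comp_smul] }

section aux
variable {K H A : Type*} [CommRing K] [AddCommGroup H] [Module K H]
    [Ring A] [Algebra K A] (act : H →ₗ[K] A →ₗ[K] A)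

lemma mulAct_tmul (g h : H) (a b : A) :
    mulAct act (g ⊗ₜ[K] h) (a ⊗ₜ[K] b) = act g a * act h b := by
  simp [mulAct]

/-- left-threefold action -/
noncomputable def lAct : (H ⊗[K] H) ⊗[K] H →ₗ[K] (A ⊗[K] A) ⊗[K] A →ₗ[K] A :=
  TensorProduct.lift
    { toFun := fun W =>
        { toFun := fun k => LinearMap.mul' K A ∘ₗ TensorProduct.map (mulAct act W) (act k)
          map_add' := by
            intro h₂ h₂'
            simp [map_add, TensorProduct.map_add_right, LinearMap.comp_add]
          map_smul' := by
            intro c h₂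
            simp [map_smul, TensorProduct.map_smul_right, LinearMap.comp_smul] }
      map_add' := by
        intro h₁ h₁'
        ext h₂
        simp [map_add, TensorProduct.map_add_left, LinearMap.comp_add]
      map_smul' := by
        intro c h₁
        ext h₂
        simp [map_smul, TensorProduct.map_smul_left, LinearMap.comp_smul] }

/-- right-threefold action -/
noncomputable def rAct : H ⊗[K] (H ⊗[K] H) →ₗ[K] A ⊗[K] (A ⊗[K] A) →ₗ[K] A :=
  TensorProduct.lift
    { toFun := fun g =>
        { toFun := fun W => LinearMap.mul' K A ∘ₗ TensorProduct.map (act g) (mulAct act W)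
          map_add' := by
            intro h₂ h₂'
            simp [map_add, TensorProduct.map_add_right, LinearMap.comp_add]
          map_smul' := by
            intro c h₂
            simp [map_smul, TensorProduct.map_smul_right, LinearMap.comp_smul] }
      map_add' := by
        intro h₁ h₁'
        ext h₂
        simp [map_add, TensorProduct.map_add_left, LinearMap.comp_add]
      map_smul' := by
        intro c h₁
        ext h₂
        simp [map_smul, TensorProduct.map_smul_left, LinearMap.comp_smul] }

lemma lAct_tmul (W : H ⊗[K] H) (k : H) (x : A ⊗[K] A) (c : A) :
    lAct act (W ⊗ₜ[K] k) (x ⊗ₜ[K] c) = mulAct act W x * act k c := by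
  simp [lAct]

lemma rAct_tmul (g : H) (W : H ⊗[K] H) (a : A) (y : A ⊗[K] A) :
    rAct act (g ⊗ₜ[K] W) (a ⊗ₜ[K] y) = act g a * mulAct act W y := by
  simp [rAct]

end aux

section main
variable {K H A : Type*} [Field K]
    [Ring H] [HopfAlgebra K H] [Ring A] [Algebra K A]
    (act : H →ₗ[K] A →ₗ[K] A)

lemma mulAct_mul_tmul (hmul : ∀ g k : H, act (g * k) = act g ∘ₗ act k)
    (Z : H ⊗[K] H) (g' h' : H) (a b : A) :
    mulAct act (Z * (g' ⊗ₜ[K] h')) (a ⊗ₜ[K] b)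
      = mulAct act Z (act g' a ⊗ₜ[K] act h' b) := by
  induction Z using TensorProduct.induction_on with
  | zero => simp
  | tmul g h =>
      rw [Algebra.TensorProduct.tmul_mul_tmul, mulAct_tmul, mulAct_tmul, hmul, hmul]
      rfl
  | add x y hx hy => simp [add_mul, hx, hy]

lemma star_left (hmul : ∀ g k : H, act (g * k) = act g ∘ₗ act k)
    (hmodalg : ∀ (g : H) (a b : A),
      act g (a * b) = mulAct act (Coalgebra.comul g) (a ⊗ₜ[K] b))
    (G F' : H ⊗[K] H) (a b c : A) :
    mulAct act G ((mulAct act F' (a ⊗ₜ[K] b)) ⊗ₜ[K] c)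
      = lAct act ((TensorProduct.map Coalgebra.comul LinearMap.id G)
          * (F' ⊗ₜ[K] (1 : H))) ((a ⊗ₜ[K] b) ⊗ₜ[K] c) := by
  induction G using TensorProduct.induction_on with
  | zero => simp
  | add x y hx hy => simp [add_mul, hx, hy]
  | tmul g h =>
      induction F' using TensorProduct.induction_on with
      | zero => simp
      | add x y hx hy => simp [mul_add, add_tmul, hx, hy, map_add, LinearMap.add_apply]
      | tmul g' h' =>
          rw [mulAct_tmul, mulAct_tmul, hmodalg, ← mulAct_mul_tmul act hmul]
          rw [TensorProduct.map_tmul, Algebra.TensorProduct.tmul_mul_tmul, lAct_tmul]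
          simp

lemma star_right (hmul : ∀ g k : H, act (g * k) = act g ∘ₗ act k)
    (hmodalg : ∀ (g : H) (a b : A),
      act g (a * b) = mulAct act (Coalgebra.comul g) (a ⊗ₜ[K] b))
    (G F' : H ⊗[K] H) (a b c : A) :
    mulAct act G (a ⊗ₜ[K] (mulAct act F' (b ⊗ₜ[K] c)))
      = rAct act ((TensorProduct.map LinearMap.id Coalgebra.comul G)
          * ((1 : H) ⊗ₜ[K] F')) (a ⊗ₜ[K] (b ⊗ₜ[K] c)) := by
  induction G using TensorProduct.induction_on with
  | zero => simp
  | add x y hx hy => simp [add_mul, hx, hy]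
  | tmul g h =>
      induction F' using TensorProduct.induction_on with
      | zero => simp
      | add x y hx hy => simp [mul_add, tmul_add, hx, hy, map_add, LinearMap.add_apply]
      | tmul g' h' =>
          rw [mulAct_tmul, mulAct_tmul, hmodalg, ← mulAct_mul_tmul act hmul]
          rw [TensorProduct.map_tmul, Algebra.TensorProduct.tmul_mul_tmul, rAct_tmul]
          simp

set_option synthInstance.maxHeartbeats 800000 in
lemma lAct_assoc_symm (T : H ⊗[K] (H ⊗[K] H)) (a b c : A) :
    lAct act ((TensorProduct.assoc K H H H).symm T) ((a ⊗ₜ[K] b) ⊗ₜ[K] c)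
      = rAct act T (a ⊗ₜ[K] (b ⊗ₜ[K] c)) := by
  induction T using TensorProduct.induction_on with
  | zero => rw [LinearEquiv.map_zero]; simp
  | add x y hx hy =>
      rw [LinearEquiv.map_add]
      simp only [map_add, LinearMap.add_apply]
      rw [hx, hy]
  | tmul g W =>
      induction W using TensorProduct.induction_on with
      | zero => simp
      | add x y hx hy =>
          simp only [tmul_add, map_add, LinearMap.add_apply] at hx hy ⊢
          rw [hx, hy]
      | tmul g' h' =>
          rw [TensorProduct.assoc_symm_tmul, lAct_tmul, rAct_tmul,
            mulAct_tmul, mulAct_tmul, mul_assoc]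

end main


section cocycle
variable {K H : Type*} [Field K] [Ring H] [HopfAlgebra K H]

lemma D1_eq (X : H ⊗[K] H) :
    Algebra.TensorProduct.map (Bialgebra.comulAlgHom K H) (AlgHom.id K H) X
      = TensorProduct.map Coalgebra.comul LinearMap.id X := by
  induction X using TensorProduct.induction_on with
  | zero => simp
  | add x y hx hy => simp [map_add, hx, hy]
  | tmul g h => simp

lemma D2_eq (X : H ⊗[K] H) :
    Algebra.TensorProduct.map (AlgHom.id K H) (Bialgebra.comulAlgHom K H) X
      = TensorProduct.map LinearMap.id Coalgebra.comul X := by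
  induction X using TensorProduct.induction_on with
  | zero => simp
  | add x y hx hy => simp [map_add, hx, hy]
  | tmul g h => simp

lemma sigma_eq (x : H ⊗[K] (H ⊗[K] H)) :
    (Algebra.TensorProduct.assoc K K K H H H).symm x
      = (TensorProduct.assoc K H H H).symm x := rfl

set_option maxHeartbeats 1000000 in
lemma cocycle_inv (F Finv : H ⊗[K] H)
    (hinv₁ : F * Finv = 1) (hinv₂ : Finv * F = 1)
    (hcocycle :
      (F ⊗ₜ[K] (1 : H)) * (TensorProduct.map Coalgebra.comul LinearMap.id F)
        = (TensorProduct.assoc K H H H).symm ((1 : H) ⊗ₜ[K] F)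
          * (TensorProduct.assoc K H H H).symm
              ((TensorProduct.map LinearMap.id Coalgebra.comul) F)) :
    (TensorProduct.map Coalgebra.comul LinearMap.id Finv) * (Finv ⊗ₜ[K] (1 : H))
      = (TensorProduct.assoc K H H H).symm
          ((TensorProduct.map LinearMap.id Coalgebra.comul Finv)
            * ((1 : H) ⊗ₜ[K] Finv)) := by
  set D1 : H ⊗[K] H →ₐ[K] (H ⊗[K] H) ⊗[K] H :=
    Algebra.TensorProduct.map (Bialgebra.comulAlgHom K H) (AlgHom.id K H) with hD1def
  set ι1 : H ⊗[K] H →ₐ[K] (H ⊗[K] H) ⊗[K] H :=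
    Algebra.TensorProduct.includeLeft with hι1def
  set D2 : H ⊗[K] H →ₐ[K] H ⊗[K] (H ⊗[K] H) :=
    Algebra.TensorProduct.map (AlgHom.id K H) (Bialgebra.comulAlgHom K H) with hD2def
  set ι2 : H ⊗[K] H →ₐ[K] H ⊗[K] (H ⊗[K] H) :=
    Algebra.TensorProduct.includeRight with hι2def
  set σ : H ⊗[K] (H ⊗[K] H) ≃ₐ[K] (H ⊗[K] H) ⊗[K] H :=
    (Algebra.TensorProduct.assoc K K K H H H).symm with hσdef
  have hι1 : ∀ X : H ⊗[K] H, ι1 X = X ⊗ₜ[K] (1 : H) := fun X => rfl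
  have hι2 : ∀ X : H ⊗[K] H, ι2 X = (1 : H) ⊗ₜ[K] X := fun X => rfl
  have hσ : ∀ x : H ⊗[K] (H ⊗[K] H),
      σ x = (TensorProduct.assoc K H H H).symm x := fun x => rfl
  have hu : ι1 F * D1 F = σ (ι2 F) * σ (D2 F) := by
    rw [hι1, hσ, hσ, hι2, hD1def, hD2def, D1_eq, D2_eq]
    exact hcocycle
  have h1 : (ι1 F * D1 F) * (σ (D2 Finv) * σ (ι2 Finv)) = 1 := by
    rw [hu, ← map_mul, ← map_mul, ← map_mul]
    have : (ι2 F * D2 F) * (D2 Finv * ι2 Finv) = 1 := by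
      have hmid : D2 F * D2 Finv = 1 := by rw [← map_mul, hinv₁, map_one]
      rw [mul_assoc, ← mul_assoc (D2 F), hmid, one_mul, ← map_mul, hinv₁, map_one]
    rw [this, map_one]
  have h2 : (D1 Finv * ι1 Finv) * (ι1 F * D1 F) = 1 := by
    have hmid : ι1 Finv * ι1 F = 1 := by rw [← map_mul, hinv₂, map_one]
    rw [mul_assoc, ← mul_assoc (ι1 Finv), hmid, one_mul, ← map_mul, hinv₂, map_one]
  have key : D1 Finv * ι1 Finv = σ (D2 Finv * ι2 Finv) := by
    calc D1 Finv * ι1 Finv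
        = (D1 Finv * ι1 Finv) * ((ι1 F * D1 F) * (σ (D2 Finv) * σ (ι2 Finv))) := by
          rw [h1, mul_one]
      _ = ((D1 Finv * ι1 Finv) * (ι1 F * D1 F)) * (σ (D2 Finv) * σ (ι2 Finv)) :=
          (mul_assoc _ _ _).symm
      _ = σ (D2 Finv) * σ (ι2 Finv) := by rw [h2, one_mul]
      _ = σ (D2 Finv * ι2 Finv) := (map_mul σ _ _).symm
  rw [← D1_eq, ← D2_eq]
  exact key

end cocycle

/-- If `H` acts on an algebra `A` as a left module algebra and `F ∈ H⊗H`
is a twist, then the star product `a *_F b := μ((F⁻¹⁽¹⁾ ▷ a) ⊗ (F⁻¹⁽²⁾ ▷ b))` is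
associative on `A`. -/
theorem star_product_associative (K H A : Type*) [Field K]
    [Ring H] [HopfAlgebra K H] [Ring A] [Algebra K A]
    (act : H →ₗ[K] A →ₗ[K] A)
    -- `act` is a left action making `A` a left `H`-module algebra
    (hone : act 1 = LinearMap.id)
    (hmul : ∀ g k : H, act (g * k) = act g ∘ₗ act k)
    (hmodalg : ∀ (g : H) (a b : A),
      act g (a * b) = mulAct act (Coalgebra.comul g) (a ⊗ₜ[K] b))
    (hunit : ∀ g : H, act g 1 = Coalgebra.counit (R := K) g • (1 : A))
    -- `F` is a twist with inverse `Finv`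
    (F Finv : H ⊗[K] H)
    (hinv₁ : F * Finv = 1) (hinv₂ : Finv * F = 1)
    (hcocycle :
      (F ⊗ₜ[K] (1 : H)) * (TensorProduct.map Coalgebra.comul LinearMap.id F)
        = (TensorProduct.assoc K H H H).symm ((1 : H) ⊗ₜ[K] F)
          * (TensorProduct.assoc K H H H).symm
              ((TensorProduct.map LinearMap.id Coalgebra.comul) F))
    (hcounit₁ : (TensorProduct.lid K H)
      ((TensorProduct.map Coalgebra.counit LinearMap.id) F) = 1)
    (hcounit₂ : (TensorProduct.rid K H)
      ((TensorProduct.map LinearMap.id Coalgebra.counit) F) = 1)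
    -- the star product `a *_F b = μ((F⁻¹⁽¹⁾ ▷ a) ⊗ (F⁻¹⁽²⁾ ▷ b))`
    (star : A → A → A)
    (hstar : ∀ a b : A, star a b = mulAct act Finv (a ⊗ₜ[K] b)) :
    ∀ a b c : A, star (star a b) c = star a (star b c) := by
  intro a b c
  rw [hstar, hstar, hstar, hstar]
  rw [star_left act hmul hmodalg Finv Finv a b c,
      star_right act hmul hmodalg Finv Finv a b c,
      cocycle_inv F Finv hinv₁ hinv₂ hcocycle,
      lAct_assoc_symm]
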